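/- Let n be a natural number. Then the number of functions f : (Fin (n+1) → ZMod 2) → (Fin n → ZMod 2) for which there exists a nonzero s with f 2-to-1 and f(x + s) = f(x) for all x equals (2^{n+1} − 1) · (2^n)!, i.e., Nat.card {f // ∃ s ≠ 0, f is 2-to-1 ∧ ∀ x, f (x + s) = f x} = (2^{n+1} − 1) * (2^n)! . -/

import Mathlib

lemma addself {m : ℕ} (s : Fin m → ZMod 2) : s + s = 0 := by
  funext i
  exact (by decide : ∀ a : ZMod 2, a + a = 0) (s i)

def Hsub {m : ℕ} (s : Fin m → ZMod 2) : AddSubgroup (Fin m → ZMod 2) where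
  carrier := {0, s}
  zero_mem' := Or.inl rfl
  add_mem' := by
    rintro a b (rfl | ha) (rfl | hb) <;> simp_all [addself]
  neg_mem' := by
    rintro a (rfl | ha) <;> simp_all [neg_eq_of_add_eq_zero_left (addself _)]

lemma mem_Hsub {m : ℕ} {s x : Fin m → ZMod 2} : x ∈ Hsub s ↔ x = 0 ∨ x = s := by
  show x ∈ ({0, s} : Set (Fin m → ZMod 2)) ↔ _
  simp [Set.mem_insert_iff]

lemma mk_eq_mk {m : ℕ} {s x y : Fin m → ZMod 2} :
    (QuotientAddGroup.mk x : _ ⧸ Hsub s) = QuotientAddGroup.mk y ↔ y = x ∨ y = x + s := by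
  rw [QuotientAddGroup.eq, mem_Hsub]
  constructor
  · rintro (h | h)
    · left; exact (neg_add_eq_zero.mp h).symm
    · right; rw [← h]; abel
  · rintro (rfl | rfl)
    · left; abel
    · right; abel

lemma cardV (m : ℕ) : Nat.card (Fin m → ZMod 2) = 2 ^ m := by
  simp [Nat.card_eq_fintype_card]

lemma cardH {m : ℕ} {s : Fin m → ZMod 2} (hs : s ≠ 0) : Nat.card (Hsub s) = 2 := by
  rw [← SetLike.coe_sort_coe, Nat.card_coe_set_eq]
  show ({0, s} : Set (Fin m → ZMod 2)).ncard = 2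
  exact Set.ncard_pair (Ne.symm hs)

lemma cardQ {n : ℕ} {s : Fin (n+1) → ZMod 2} (hs : s ≠ 0) :
    Nat.card ((Fin (n+1) → ZMod 2) ⧸ Hsub s) = 2 ^ n := by
  have h := AddSubgroup.card_eq_card_quotient_mul_card_addSubgroup (Hsub s)
  rw [cardV, cardH hs, pow_succ] at h
  omega

lemma fiber_pair {n : ℕ} {s : Fin (n+1) → ZMod 2} (hs : s ≠ 0)
    {f : (Fin (n+1) → ZMod 2) → (Fin n → ZMod 2)}
    (h21 : ∀ y ∈ Set.range f, Nat.card (f ⁻¹' {y}) = 2)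
    (hper : ∀ x, f (x + s) = f x) (x₀ : Fin (n+1) → ZMod 2) :
    f ⁻¹' {f x₀} = {x₀, x₀ + s} := by
  have hne : x₀ ≠ x₀ + s := fun h => hs (left_eq_add.mp h)
  have hsub : ({x₀, x₀ + s} : Set _) ⊆ f ⁻¹' {f x₀} := by
    rintro x (rfl | rfl) <;> simp [hper]
  refine (Set.eq_of_subset_of_ncard_le hsub ?_ (Set.toFinite _)).symm
  rw [Set.ncard_pair hne, ← Nat.card_coe_set_eq, h21 _ ⟨x₀, rfl⟩]

lemma P_of' {n : ℕ} {s : Fin (n+1) → ZMod 2} (hs : s ≠ 0)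
    (e : ((Fin (n+1) → ZMod 2) ⧸ Hsub s) ≃ (Fin n → ZMod 2)) :
    (∀ y ∈ Set.range (fun x => e (QuotientAddGroup.mk x)),
        Nat.card ((fun x => e (QuotientAddGroup.mk x)) ⁻¹' {y}) = 2) ∧
      ∀ x, e (QuotientAddGroup.mk (x + s)) = e (QuotientAddGroup.mk x) := by
  have hper : ∀ x : Fin (n+1) → ZMod 2,
      (QuotientAddGroup.mk (x + s) : _ ⧸ Hsub s) = QuotientAddGroup.mk x := by
    intro x
    rw [mk_eq_mk]
    right; rw [add_assoc, addself, add_zero]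
  refine ⟨?_, fun x => by rw [hper]⟩
  rintro y ⟨x₀, rfl⟩
  have hfib : (fun x => e (QuotientAddGroup.mk x)) ⁻¹' {e (QuotientAddGroup.mk x₀)}
      = {x₀, x₀ + s} := by
    ext x
    simp only [Set.mem_preimage, Set.mem_singleton_iff, EmbeddingLike.apply_eq_iff_eq,
      Set.mem_insert_iff, Set.mem_singleton_iff, mk_eq_mk]
    constructor
    · rintro (rfl | h)
      · left; rfl
      · right; rw [h, add_assoc, addself, add_zero]
    · rintro (rfl | rfl)
      · left; rfl
      · right; rw [add_assoc, addself, add_zero]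
  rw [hfib, Nat.card_coe_set_eq,
    Set.ncard_pair (fun h => hs (left_eq_add.mp h))]


lemma P_of {n : ℕ} {s : Fin (n+1) → ZMod 2} (hs : s ≠ 0)
    (e : ((Fin (n+1) → ZMod 2) ⧸ Hsub s) ≃ (Fin n → ZMod 2)) :
    ∃ t : Fin (n + 1) → ZMod 2, t ≠ 0 ∧
      (∀ y ∈ Set.range (fun x => e (QuotientAddGroup.mk x)),
        Nat.card ((fun x => e (QuotientAddGroup.mk x)) ⁻¹' {y}) = 2) ∧
      ∀ x, e (QuotientAddGroup.mk (x + t)) = e (QuotientAddGroup.mk x) :=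
  ⟨s, hs, (P_of' hs e).1, (P_of' hs e).2⟩


/-- The number of 2-to-1 Simon functions (over all nonzero masks) is
`(2^{n+1} - 1) * (2^n)!`. -/
theorem card_simon_functions (n : ℕ) :
    Nat.card {f : (Fin (n + 1) → ZMod 2) → (Fin n → ZMod 2) //
        ∃ s : Fin (n + 1) → ZMod 2, s ≠ 0 ∧
          (∀ y ∈ Set.range f, Nat.card (f ⁻¹' {y}) = 2) ∧ ∀ x, f (x + s) = f x}
      = (2 ^ (n + 1) - 1) * Nat.factorial (2 ^ n) := by
  classical
  let E : {s : Fin (n + 1) → ZMod 2 // s ≠ 0} → Type _ :=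
    fun s => ((Fin (n + 1) → ZMod 2) ⧸ Hsub s.1) ≃ (Fin n → ZMod 2)
  let Ψ : (Σ s : {s : Fin (n + 1) → ZMod 2 // s ≠ 0}, E s) →
      {f : (Fin (n + 1) → ZMod 2) → (Fin n → ZMod 2) //
        ∃ s : Fin (n + 1) → ZMod 2, s ≠ 0 ∧
          (∀ y ∈ Set.range f, Nat.card (f ⁻¹' {y}) = 2) ∧ ∀ x, f (x + s) = f x} :=
    fun p => ⟨fun x => p.2 (QuotientAddGroup.mk x),
      by obtain ⟨t, ht, h1, h2⟩ := P_of p.1.2 p.2; exact ⟨t, ht, h1, fun x => h2 x⟩⟩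
  have hbij : Function.Bijective Ψ := by
    constructor
    · rintro ⟨⟨s, hs⟩, e⟩ ⟨⟨s', hs'⟩, e'⟩ h
      have hf : (fun x => e (QuotientAddGroup.mk x)) =
          (fun x => e' (QuotientAddGroup.mk x)) := congrArg Subtype.val h
      obtain ⟨h21, hper⟩ := P_of' hs e
      obtain ⟨h21', hper'⟩ := P_of' hs' e'
      have hfib := fiber_pair hs h21 hper (0 : Fin (n + 1) → ZMod 2)
      have hfib' := fiber_pair hs' h21' hper' (0 : Fin (n + 1) → ZMod 2)
      have f0 : e (QuotientAddGroup.mk 0) = e' (QuotientAddGroup.mk 0) := congrFun hf 0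
      rw [hf, f0, hfib'] at hfib
      have hmem : s ∈ ({(0 : Fin (n+1) → ZMod 2), 0 + s'} : Set _) := by
        rw [hfib]; right; simp
      have hss : s = s' := by
        rcases hmem with h0 | h0
        · exact absurd h0 hs
        · simpa using h0
      subst hss
      have he : e = e' := by
        apply Equiv.ext
        intro q
        induction q using QuotientAddGroup.induction_on with
        | H x => exact congrFun hf x
      cases he
      rfl
    · rintro ⟨f, s, hs, h21, hper⟩
      have hresp : ∀ a b : Fin (n + 1) → ZMod 2,
          @Setoid.r _ (QuotientAddGroup.leftRel (Hsub s)) a b → f a = f b := by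
        intro a b hab
        have : -a + b ∈ Hsub s := QuotientAddGroup.leftRel_apply.mp hab
        rw [mem_Hsub] at this
        rcases this with h0 | h0
        · have : b = a := by linear_combination (norm := abel) h0
          rw [this]
        · have : b = a + s := by rw [← h0]; abel
          rw [this, hper]
      let g : ((Fin (n + 1) → ZMod 2) ⧸ Hsub s) → (Fin n → ZMod 2) :=
        fun q => Quotient.liftOn' q f hresp
      have hg : Function.Injective g := by
        intro q q'
        induction q using QuotientAddGroup.induction_on with
        | H a =>
        induction q' using QuotientAddGroup.induction_on with
        | H b =>
        intro hab
        have hfab : f a = f b := hab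
        have hfib := fiber_pair hs h21 hper a
        have hb : b ∈ f ⁻¹' {f a} := by simp [hfab.symm]
        rw [hfib] at hb
        exact mk_eq_mk.mpr hb
      letI : Fintype ((Fin (n + 1) → ZMod 2) ⧸ Hsub s) := Fintype.ofFinite _
      have hgb : Function.Bijective g := by
        rw [Fintype.bijective_iff_injective_and_card]
        refine ⟨hg, ?_⟩
        rw [← Nat.card_eq_fintype_card, ← Nat.card_eq_fintype_card, cardQ hs, cardV]
      refine ⟨⟨⟨s, hs⟩, Equiv.ofBijective g hgb⟩, ?_⟩
      apply Subtype.ext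
      funext x
      rfl
  have hcards := Nat.card_eq_of_bijective Ψ hbij
  rw [← hcards]
  letI : ∀ s : {s : Fin (n + 1) → ZMod 2 // s ≠ 0},
      Fintype ((Fin (n + 1) → ZMod 2) ⧸ Hsub s.1) := fun s => Fintype.ofFinite _
  have hE : ∀ s : {s : Fin (n + 1) → ZMod 2 // s ≠ 0},
      Nat.card (E s) = Nat.factorial (2 ^ n) := by
    intro s
    have hc : Fintype.card ((Fin (n + 1) → ZMod 2) ⧸ Hsub s.1) = 2 ^ n := by
      rw [← Nat.card_eq_fintype_card, cardQ s.2]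
    have hc' : Fintype.card ((Fin (n + 1) → ZMod 2) ⧸ Hsub s.1)
        = Fintype.card (Fin n → ZMod 2) := by simp [hc]
    rw [Nat.card_eq_fintype_card, Fintype.card_equiv (Fintype.equivOfCardEq hc'), hc]
  rw [Nat.card_eq_fintype_card, Fintype.card_sigma]
  have : ∀ s : {s : Fin (n + 1) → ZMod 2 // s ≠ 0},
      Fintype.card (E s) = Nat.factorial (2 ^ n) := by
    intro s; rw [← Nat.card_eq_fintype_card]; exact hE s
  rw [Finset.sum_congr rfl (fun s _ => this s), Finset.sum_const, smul_eq_mul]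
  congr 1
  rw [Finset.card_univ]
  have : Fintype.card {s : Fin (n + 1) → ZMod 2 // ¬ (s = 0)}
      = Fintype.card (Fin (n + 1) → ZMod 2) - Fintype.card {s : Fin (n + 1) → ZMod 2 // s = 0} :=
    Fintype.card_subtype_compl _
  rw [this, Fintype.card_subtype_eq]
  simp
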